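/- Let ℓ be a proper loss, let S : Ω → Δ(𝒴) be a measurable random variable, and set C := Q_{σ(S)}. Then (i) E[ℓ(S,Y)] = E[d_ℓ(S, C)] + E[E_ℓ(C)]; (ii) E[d_ℓ(S, C)] ≥ 0; (iii) if ℓ is strictly proper, then E[d_ℓ(S, C)] = 0 if and only if S = C almost surely; and (iv) if S = C almost surely (perfect calibration), then E[S(y)] = P(Y = y) for every y ∈ 𝒴 (global balance). -/

import Mathlib

open MeasureTheory Finset

noncomputable section

/-- The probability simplex on a finite label set `𝒴`, identified with the set of
functions `p : 𝒴 → ℝ` with nonnegative coordinates summing to one. -/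
def simplex (𝒴 : Type*) [Fintype 𝒴] : Set (𝒴 → ℝ) :=
  {p | (∀ y, 0 ≤ p y) ∧ ∑ y, p y = 1}

/-- Conditional risk `L(p,q) := ∑_y q(y) ℓ(p,y)`. -/
def condRisk {𝒴 : Type*} [Fintype 𝒴] (ℓ : (𝒴 → ℝ) → 𝒴 → ℝ) (p q : 𝒴 → ℝ) : ℝ :=
  ∑ y, q y * ℓ p y

/-- Generalized entropy `E_ℓ(q) := L(q,q)`. -/
def gEntropy {𝒴 : Type*} [Fintype 𝒴] (ℓ : (𝒴 → ℝ) → 𝒴 → ℝ) (q : 𝒴 → ℝ) : ℝ :=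
  condRisk ℓ q q

/-- Divergence (regret) `d_ℓ(p,q) := L(p,q) - E_ℓ(q)`. -/
def divg {𝒴 : Type*} [Fintype 𝒴] (ℓ : (𝒴 → ℝ) → 𝒴 → ℝ) (p q : 𝒴 → ℝ) : ℝ :=
  condRisk ℓ p q - gEntropy ℓ q

/-- calibration error as proper regret. Let `ℓ` be a proper loss,
`S` a measurable `Δ(𝒴)`-valued score and `C := Q_{σ(S)}`. Then
(i) `E[ℓ(S,Y)] = E[d_ℓ(S,C)] + E[E_ℓ(C)]`; (ii) `E[d_ℓ(S,C)] ≥ 0`;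
(iii) if `ℓ` is strictly proper, `E[d_ℓ(S,C)] = 0` iff `S = C` a.s.;
(iv) if `S = C` a.s. (perfect calibration) then `E[S(y)] = P(Y = y)` for all `y`
(global balance). -/
theorem calibration_error_as_proper_regret
    {Ω 𝒴 : Type*} [Fintype 𝒴] [Nonempty 𝒴]
    [MeasurableSpace 𝒴] [MeasurableSingletonClass 𝒴]
    {mΩ : MeasurableSpace Ω} {P : Measure Ω} [IsProbabilityMeasure P]
    (Y : Ω → 𝒴) (hY : Measurable Y)
    (ℓ : (𝒴 → ℝ) → 𝒴 → ℝ)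
    (hℓmeas : ∀ y, Measurable fun p : 𝒴 → ℝ => ℓ p y)
    (hℓbdd : ∃ M : ℝ, ∀ p ∈ simplex 𝒴, ∀ y, |ℓ p y| ≤ M)
    (hproper : ∀ p ∈ simplex 𝒴, ∀ q ∈ simplex 𝒴, 0 ≤ divg ℓ p q)
    (S : Ω → 𝒴 → ℝ) (hSΔ : ∀ ω, S ω ∈ simplex 𝒴) (hSmeas : Measurable S)
    (C : Ω → 𝒴 → ℝ) (hCΔ : ∀ ω, C ω ∈ simplex 𝒴)
    (hCmeas : ∀ y, Measurable[MeasurableSpace.comap S inferInstance] fun ω => C ω y)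
    (hCver : ∀ y, (fun ω => C ω y)
      =ᵐ[P] P[Set.indicator {ω | Y ω = y} (fun _ => (1 : ℝ))
              | MeasurableSpace.comap S inferInstance]) :
    (∫ ω, ℓ (S ω) (Y ω) ∂P
        = ∫ ω, divg ℓ (S ω) (C ω) ∂P + ∫ ω, gEntropy ℓ (C ω) ∂P) ∧
    (0 ≤ ∫ ω, divg ℓ (S ω) (C ω) ∂P) ∧
    ((∀ p ∈ simplex 𝒴, ∀ q ∈ simplex 𝒴, divg ℓ p q = 0 → p = q) →
      (∫ ω, divg ℓ (S ω) (C ω) ∂P = 0 ↔ S =ᵐ[P] C)) ∧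
    (S =ᵐ[P] C → ∀ y, ∫ ω, S ω y ∂P = (P {ω | Y ω = y}).toReal) := by
  classical
  obtain ⟨M, hM⟩ := hℓbdd
  have hm : MeasurableSpace.comap S inferInstance ≤ mΩ := hSmeas.comap_le
  haveI : SigmaFinite (P.trim hm) := by
    haveI : IsFiniteMeasure (P.trim hm) := isFiniteMeasure_trim hm
    infer_instance
  have hSm : Measurable[MeasurableSpace.comap S inferInstance] S := measurable_iff_comap_le.mpr le_rfl
  -- M is nonnegative
  have hcard : (0:ℝ) < Fintype.card 𝒴 := by
    exact_mod_cast Fintype.card_pos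
  have hunif : (fun _ : 𝒴 => (Fintype.card 𝒴 : ℝ)⁻¹) ∈ simplex 𝒴 := by
    constructor
    · intro y; positivity
    · simp [Finset.sum_const, Finset.card_univ]
  have hM0 : 0 ≤ M := le_trans (abs_nonneg _) (hM _ hunif (Classical.arbitrary 𝒴))
  -- simplex coordinates lie in [0,1]
  have hcoord : ∀ q ∈ simplex 𝒴, ∀ y, q y ≤ 1 := by
    intro q hq y
    calc q y ≤ ∑ z, q z := Finset.single_le_sum (fun z _ => hq.1 z) (Finset.mem_univ y)
    _ = 1 := hq.2
  -- measurability of C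
  have hCy : ∀ y, Measurable[mΩ] fun ω => C ω y := fun y => (hCmeas y).mono hm le_rfl
  have hCm : Measurable[mΩ] C := measurable_pi_lambda _ hCy
  -- indicator functions
  have hYset : ∀ y : 𝒴, MeasurableSet[mΩ] {ω | Y ω = y} := fun y =>
    hY (measurableSet_singleton y)
  have hindmeas : ∀ y : 𝒴, Measurable[mΩ] (Set.indicator {ω | Y ω = y} (fun _ => (1:ℝ))) :=
    fun y => measurable_const.indicator (hYset y)
  -- integrability from boundedness
  have hint : ∀ {f : Ω → ℝ}, Measurable[mΩ] f → ∀ K : ℝ, (∀ ω, |f ω| ≤ K) → Integrable f P := by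
    intro f hf K hK
    exact (integrable_const K).mono' hf.aestronglyMeasurable
      (ae_of_all _ fun ω => by simpa [Real.norm_eq_abs] using hK ω)
  -- loss components
  have hgmeas : ∀ y, Measurable[mΩ] fun ω => ℓ (S ω) y := fun y => (hℓmeas y).comp hSmeas
  have hgm : ∀ y, Measurable[MeasurableSpace.comap S inferInstance] fun ω => ℓ (S ω) y := fun y => (hℓmeas y).comp hSm
  have hgbd : ∀ y ω, |ℓ (S ω) y| ≤ M := fun y ω => hM _ (hSΔ ω) y
  have hhmeas : ∀ y, Measurable[mΩ] fun ω => ℓ (C ω) y := fun y => (hℓmeas y).comp hCm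
  have hhbd : ∀ y ω, |ℓ (C ω) y| ≤ M := fun y ω => hM _ (hCΔ ω) y
  have hCbd : ∀ y ω, |C ω y| ≤ 1 := fun y ω => by
    rw [abs_of_nonneg ((hCΔ ω).1 y)]; exact hcoord _ (hCΔ ω) y
  have hindbd : ∀ y ω, |Set.indicator {ω' | Y ω' = y} (fun _ => (1:ℝ)) ω| ≤ 1 := by
    intro y ω
    by_cases h : Y ω = y <;> simp [Set.indicator_apply, h]
  have hind_int : ∀ y, Integrable (Set.indicator {ω | Y ω = y} (fun _ => (1:ℝ))) P :=
    fun y => hint (hindmeas y) 1 (hindbd y)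
  have hprod_int : ∀ y, Integrable
      (fun ω => ℓ (S ω) y * Set.indicator {ω' | Y ω' = y} (fun _ => (1:ℝ)) ω) P := by
    intro y
    refine hint ((hgmeas y).mul (hindmeas y)) M fun ω => ?_
    rw [abs_mul]
    calc |ℓ (S ω) y| * |Set.indicator {ω' | Y ω' = y} (fun _ => (1:ℝ)) ω| ≤ M * 1 :=
      mul_le_mul (hgbd y ω) (hindbd y ω) (abs_nonneg _) hM0
    _ = M := mul_one M
  have hSC_int : ∀ y, Integrable (fun ω => ℓ (S ω) y * C ω y) P := by
    intro y
    refine hint ((hgmeas y).mul (hCy y)) M fun ω => ?_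
    rw [abs_mul]
    calc |ℓ (S ω) y| * |C ω y| ≤ M * 1 :=
      mul_le_mul (hgbd y ω) (hCbd y ω) (abs_nonneg _) hM0
    _ = M := mul_one M
  -- key conditioning step
  have key : ∀ y : 𝒴,
      ∫ ω, ℓ (S ω) y * Set.indicator {ω' | Y ω' = y} (fun _ => (1:ℝ)) ω ∂P
        = ∫ ω, ℓ (S ω) y * C ω y ∂P := by
    intro y
    have hpull := condExp_stronglyMeasurable_mul_of_bound hm (hgm y).stronglyMeasurable
      (hind_int y) M (ae_of_all _ fun ω => by simpa [Real.norm_eq_abs] using hgbd y ω)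
    calc ∫ ω, ℓ (S ω) y * Set.indicator {ω' | Y ω' = y} (fun _ => (1:ℝ)) ω ∂P
        = ∫ ω, (P[(fun ω => ℓ (S ω) y) * Set.indicator {ω' | Y ω' = y} (fun _ => (1:ℝ)) | MeasurableSpace.comap S inferInstance]) ω ∂P :=
          (integral_condExp hm).symm
      _ = ∫ ω, ℓ (S ω) y * (P[Set.indicator {ω' | Y ω' = y} (fun _ => (1:ℝ)) | MeasurableSpace.comap S inferInstance]) ω ∂P :=
          integral_congr_ae (hpull.mono fun ω h => by simpa using h)
      _ = ∫ ω, ℓ (S ω) y * C ω y ∂P :=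
          integral_congr_ae ((hCver y).symm.mono fun ω h => by dsimp; rw [h])
  -- pointwise decomposition of the loss at Y
  have hdecomp : ∀ ω, ℓ (S ω) (Y ω)
      = ∑ y, ℓ (S ω) y * Set.indicator {ω' | Y ω' = y} (fun _ => (1:ℝ)) ω := by
    intro ω
    rw [Finset.sum_eq_single (Y ω)]
    · simp [Set.indicator_apply]
    · intro b _ hb
      have hω : ω ∉ {ω' | Y ω' = b} := fun h => hb (Eq.symm h)
      simp [Set.indicator_of_notMem hω]
    · simp
  -- boundedness of condRisk on the simplex
  have hcondRisk_bd : ∀ p ∈ simplex 𝒴, ∀ q ∈ simplex 𝒴,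
      |condRisk ℓ p q| ≤ Fintype.card 𝒴 * M := by
    intro p hp q hq
    calc |condRisk ℓ p q| ≤ ∑ y, |q y * ℓ p y| := Finset.abs_sum_le_sum_abs _ _
    _ ≤ ∑ _y : 𝒴, M := by
        refine Finset.sum_le_sum fun y _ => ?_
        rw [abs_mul]
        calc |q y| * |ℓ p y| ≤ 1 * M := by
              refine mul_le_mul ?_ (hM p hp y) (abs_nonneg _) zero_le_one
              rw [abs_of_nonneg (hq.1 y)]; exact hcoord q hq y
        _ = M := one_mul M
    _ = Fintype.card 𝒴 * M := by simp [Finset.sum_const, Finset.card_univ, nsmul_eq_mul]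
  -- measurability and integrability of the composed quantities
  have hgEnt_meas : Measurable[mΩ] fun ω => gEntropy ℓ (C ω) := by
    unfold gEntropy condRisk
    exact Finset.measurable_sum _ fun y _ => (hCy y).mul (hhmeas y)
  have hgEnt_int : Integrable (fun ω => gEntropy ℓ (C ω)) P :=
    hint hgEnt_meas (Fintype.card 𝒴 * M) fun ω => hcondRisk_bd _ (hCΔ ω) _ (hCΔ ω)
  have hcondRisk_meas : Measurable[mΩ] fun ω => condRisk ℓ (S ω) (C ω) := by
    unfold condRisk
    exact Finset.measurable_sum _ fun y _ => (hCy y).mul (hgmeas y)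
  have hcondRisk_int : Integrable (fun ω => condRisk ℓ (S ω) (C ω)) P :=
    hint hcondRisk_meas (Fintype.card 𝒴 * M) fun ω => hcondRisk_bd _ (hSΔ ω) _ (hCΔ ω)
  have hdivg_int : Integrable (fun ω => divg ℓ (S ω) (C ω)) P := by
    have : (fun ω => divg ℓ (S ω) (C ω))
        = fun ω => condRisk ℓ (S ω) (C ω) - gEntropy ℓ (C ω) := rfl
    rw [this]
    exact hcondRisk_int.sub hgEnt_int
  -- (i)
  have hi : ∫ ω, ℓ (S ω) (Y ω) ∂P
      = ∫ ω, divg ℓ (S ω) (C ω) ∂P + ∫ ω, gEntropy ℓ (C ω) ∂P := by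
    have h1 : ∫ ω, ℓ (S ω) (Y ω) ∂P = ∫ ω, condRisk ℓ (S ω) (C ω) ∂P := by
      calc ∫ ω, ℓ (S ω) (Y ω) ∂P
          = ∫ ω, ∑ y, ℓ (S ω) y * Set.indicator {ω' | Y ω' = y} (fun _ => (1:ℝ)) ω ∂P :=
            integral_congr_ae (ae_of_all _ hdecomp)
        _ = ∑ y, ∫ ω, ℓ (S ω) y * Set.indicator {ω' | Y ω' = y} (fun _ => (1:ℝ)) ω ∂P :=
            integral_finset_sum _ fun y _ => hprod_int y
        _ = ∑ y, ∫ ω, ℓ (S ω) y * C ω y ∂P := by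
            exact Finset.sum_congr rfl fun y _ => key y
        _ = ∫ ω, ∑ y, ℓ (S ω) y * C ω y ∂P :=
            (integral_finset_sum _ fun y _ => hSC_int y).symm
        _ = ∫ ω, condRisk ℓ (S ω) (C ω) ∂P := by
            refine integral_congr_ae (ae_of_all _ fun ω => ?_)
            unfold condRisk
            exact Finset.sum_congr rfl fun y _ => mul_comm _ _
    rw [h1, ← integral_add hdivg_int hgEnt_int]
    refine integral_congr_ae (ae_of_all _ fun ω => ?_)
    simp [divg]
  -- (ii)
  have hii : 0 ≤ ∫ ω, divg ℓ (S ω) (C ω) ∂P :=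
    integral_nonneg fun ω => hproper _ (hSΔ ω) _ (hCΔ ω)
  refine ⟨hi, hii, ?_, ?_⟩
  -- (iii)
  · intro hstrict
    constructor
    · intro h0
      have hz := (integral_eq_zero_iff_of_nonneg
        (fun ω => hproper _ (hSΔ ω) _ (hCΔ ω)) hdivg_int).mp h0
      filter_upwards [hz] with ω hω
      exact hstrict _ (hSΔ ω) _ (hCΔ ω) hω
    · intro hSC
      have hz : (fun ω => divg ℓ (S ω) (C ω)) =ᵐ[P] fun _ => 0 :=
        hSC.mono fun ω h => by simp [h, divg, gEntropy]
      rw [integral_congr_ae hz, integral_zero]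
  -- (iv)
  · intro hSC y
    have h1 : ∫ ω, S ω y ∂P = ∫ ω, C ω y ∂P :=
      integral_congr_ae (hSC.mono fun ω h => congrFun h y)
    have h2 : ∫ ω, C ω y ∂P
        = ∫ ω, (P[Set.indicator {ω' | Y ω' = y} (fun _ => (1:ℝ)) | MeasurableSpace.comap S inferInstance]) ω ∂P :=
      integral_congr_ae (hCver y)
    rw [h1, h2, integral_condExp hm, integral_indicator (hYset y)]
    simp [Measure.real]
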